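/- Let A be an associative unital ring, and let e ∈ Mat_n(A) and f ∈ Mat_m(A) be idempotent matrices (e² = e, f² = f). Consider the left A-modules P_e = { v * e : v ∈ A^n } (the range of right multiplication by e on row vectors in A^n = Fin n → A, a submodule for the componentwise left A-action) and P_f ⊆ A^m defined analogously. Then P_e and P_f are isomorphic as left A-modules if and only if the idempotents fromBlocks e 0 0 0 and fromBlocks 0 0 0 f in Mat_{n+m}(A) are conjugate, i.e., there exists an invertible matrix g ∈ GL_{n+m}(A) with g · (fromBlocks e 0 0 0) · g^{-1} = fromBlocks 0 0 0 f. -/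

import Mathlib

open Matrix

section Aux

variable {A : Type*} [Ring A] {n m : ℕ}

private lemma vecMul_eq_sum' (v : Fin n → A) (M : Matrix (Fin n) (Fin m) A) :
    v ᵥ* M = ∑ i, v i • M i := by
  ext j
  simp [vecMul, dotProduct, Finset.sum_apply]

private lemma row_mem_range (e : Matrix (Fin n) (Fin n) A) (i : Fin n) :
    e i ∈ LinearMap.range e.vecMulLinear :=
  ⟨Pi.single i 1, by simp [vecMulLinear_apply]; rfl⟩

private lemma vecMul_mem_range (e : Matrix (Fin n) (Fin n) A) (v : Fin n → A) :
    v ᵥ* e ∈ LinearMap.range e.vecMulLinear :=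
  ⟨v, by rw [vecMulLinear_apply]⟩

private lemma fix_of_mem_range {e : Matrix (Fin n) (Fin n) A} (he : e * e = e)
    {w : Fin n → A} (hw : w ∈ LinearMap.range e.vecMulLinear) : w ᵥ* e = w := by
  obtain ⟨v, rfl⟩ := hw
  rw [vecMulLinear_apply, vecMul_vecMul, he]

/-- matrix associated to a linear map between ranges of right multiplications -/
private noncomputable def matOf (e : Matrix (Fin n) (Fin n) A) (f : Matrix (Fin m) (Fin m) A)
    (ψ : ↥(LinearMap.range e.vecMulLinear) →ₗ[A] ↥(LinearMap.range f.vecMulLinear)) :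
    Matrix (Fin n) (Fin m) A :=
  Matrix.of fun i => ((ψ ⟨e i, row_mem_range e i⟩ : ↥(LinearMap.range f.vecMulLinear)) : Fin m → A)

private lemma matOf_spec (e : Matrix (Fin n) (Fin n) A) (f : Matrix (Fin m) (Fin m) A)
    (ψ : ↥(LinearMap.range e.vecMulLinear) →ₗ[A] ↥(LinearMap.range f.vecMulLinear))
    (v : Fin n → A) :
    ((ψ ⟨v ᵥ* e, vecMul_mem_range e v⟩ : ↥(LinearMap.range f.vecMulLinear)) : Fin m → A)
      = v ᵥ* matOf e f ψ := by
  have h1 : (⟨v ᵥ* e, vecMul_mem_range e v⟩ : ↥(LinearMap.range e.vecMulLinear))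
      = ∑ i, v i • (⟨e i, row_mem_range e i⟩ : ↥(LinearMap.range e.vecMulLinear)) := by
    apply Subtype.ext
    simp only [AddSubmonoidClass.coe_finset_sum, SetLike.val_smul]
    exact vecMul_eq_sum' v e
  rw [h1, map_sum, vecMul_eq_sum' v (matOf e f ψ)]
  simp only [_root_.map_smul, AddSubmonoidClass.coe_finset_sum, SetLike.val_smul]
  rfl

private lemma e_mul_matOf {e : Matrix (Fin n) (Fin n) A} (he : e * e = e)
    (f : Matrix (Fin m) (Fin m) A)
    (ψ : ↥(LinearMap.range e.vecMulLinear) →ₗ[A] ↥(LinearMap.range f.vecMulLinear)) :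
    e * matOf e f ψ = matOf e f ψ := by
  have hrow : ∀ i, (e * matOf e f ψ) i = matOf e f ψ i := by
    intro i
    rw [mul_apply_eq_vecMul]
    have h := matOf_spec e f ψ (e i)
    have harg : (⟨e i ᵥ* e, vecMul_mem_range e (e i)⟩ : ↥(LinearMap.range e.vecMulLinear))
        = ⟨e i, row_mem_range e i⟩ :=
      Subtype.ext (fix_of_mem_range he (row_mem_range e i))
    rw [harg] at h
    rw [← h]
    rfl
  ext i j
  exact congrFun (hrow i) j

private lemma matOf_mul_f (e : Matrix (Fin n) (Fin n) A)
    {f : Matrix (Fin m) (Fin m) A} (hf : f * f = f)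
    (ψ : ↥(LinearMap.range e.vecMulLinear) →ₗ[A] ↥(LinearMap.range f.vecMulLinear)) :
    matOf e f ψ * f = matOf e f ψ := by
  have hrow : ∀ i, (matOf e f ψ * f) i = matOf e f ψ i := by
    intro i
    rw [mul_apply_eq_vecMul]
    exact fix_of_mem_range hf (ψ ⟨e i, row_mem_range e i⟩).2
  ext i j
  exact congrFun (hrow i) j

private lemma matOf_mul_matOf {e : Matrix (Fin n) (Fin n) A}
    {f : Matrix (Fin m) (Fin m) A} (hf : f * f = f)
    (φ : ↥(LinearMap.range e.vecMulLinear) ≃ₗ[A] ↥(LinearMap.range f.vecMulLinear)) :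
    matOf e f φ.toLinearMap * matOf f e φ.symm.toLinearMap = e := by
  set a := matOf e f φ.toLinearMap with ha
  set b := matOf f e φ.symm.toLinearMap with hb
  have hamem : ∀ i, a i ∈ LinearMap.range f.vecMulLinear := fun i =>
    (φ ⟨e i, row_mem_range e i⟩).2
  have hrow : ∀ i, (a * b) i = e i := by
    intro i
    rw [mul_apply_eq_vecMul]
    have h := matOf_spec f e φ.symm.toLinearMap (a i)
    have harg : (⟨a i ᵥ* f, vecMul_mem_range f (a i)⟩ : ↥(LinearMap.range f.vecMulLinear))
        = φ ⟨e i, row_mem_range e i⟩ := by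
      exact Subtype.ext (fix_of_mem_range hf (hamem i))
    rw [harg] at h
    rw [← h]
    simp
  ext i j
  exact congrFun (hrow i) j

private lemma units_of_ab {e : Matrix (Fin n) (Fin n) A} (he : e * e = e)
    {f : Matrix (Fin m) (Fin m) A} (hf : f * f = f)
    (a : Matrix (Fin n) (Fin m) A) (b : Matrix (Fin m) (Fin n) A)
    (hea : e * a = a) (haf : a * f = a) (hfb : f * b = b) (hbe : b * e = b)
    (hab : a * b = e) (hba : b * a = f) :
    ∃ g : (Matrix (Fin n ⊕ Fin m) (Fin n ⊕ Fin m) A)ˣ,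
      g.val * Matrix.fromBlocks e 0 0 0 * (g⁻¹).val = Matrix.fromBlocks 0 0 0 f := by
  set G : Matrix (Fin n ⊕ Fin m) (Fin n ⊕ Fin m) A :=
    Matrix.fromBlocks (1 - e) a b (1 - f) with hG
  have c11 : (1 - e) * (1 - e) + a * b = (1 : Matrix (Fin n) (Fin n) A) := by
    simp only [Matrix.sub_mul, Matrix.mul_sub, he, hab, Matrix.mul_one, Matrix.one_mul]
    abel
  have c12 : (1 - e) * a + a * (1 - f) = 0 := by
    simp only [Matrix.sub_mul, Matrix.mul_sub, hea, haf, Matrix.one_mul, Matrix.mul_one]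
    abel
  have c21 : b * (1 - e) + (1 - f) * b = 0 := by
    simp only [Matrix.sub_mul, Matrix.mul_sub, hbe, hfb, Matrix.one_mul, Matrix.mul_one]
    abel
  have c22 : b * a + (1 - f) * (1 - f) = (1 : Matrix (Fin m) (Fin m) A) := by
    simp only [Matrix.sub_mul, Matrix.mul_sub, hf, hba, Matrix.mul_one, Matrix.one_mul]
    abel
  have hGG : G * G = 1 := by
    rw [hG, fromBlocks_multiply, c11, c12, c21, c22, fromBlocks_one]
  refine ⟨⟨G, G, hGG, hGG⟩, ?_⟩
  show G * Matrix.fromBlocks e 0 0 0 * G = Matrix.fromBlocks 0 0 0 f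
  have h1 : (1 - e) * e = 0 := by rw [Matrix.sub_mul, Matrix.one_mul, he, sub_self]
  have h2 : b * (1 - e) = 0 := by rw [Matrix.mul_sub, Matrix.mul_one, hbe, sub_self]
  rw [hG, fromBlocks_multiply, fromBlocks_multiply]
  simp [h1, h2, hbe, hba]

end Aux

/-- For idempotent matrices `e ∈ Matₙ(A)`, `f ∈ Matₘ(A)`,
the left `A`-modules `Pₑ = {v * e}` and `P_f = {w * f}` are isomorphic iff the
block idempotents `diag(e,0)` and `diag(0,f)` are conjugate in `GL_{n+m}(A)`. -/
theorem idempotent_ranges_iso_iff_conjugate (A : Type*) [Ring A] (n m : ℕ)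
    (e : Matrix (Fin n) (Fin n) A) (he : e * e = e)
    (f : Matrix (Fin m) (Fin m) A) (hf : f * f = f) :
    Nonempty
      (↥(LinearMap.range e.vecMulLinear) ≃ₗ[A] ↥(LinearMap.range f.vecMulLinear)) ↔
    ∃ g : (Matrix (Fin n ⊕ Fin m) (Fin n ⊕ Fin m) A)ˣ,
      g.val * Matrix.fromBlocks e 0 0 0 * (g⁻¹).val = Matrix.fromBlocks 0 0 0 f := by
  constructor
  · rintro ⟨φ⟩
    refine units_of_ab he hf (matOf e f φ.toLinearMap) (matOf f e φ.symm.toLinearMap)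
      (e_mul_matOf he f φ.toLinearMap) (matOf_mul_f e hf φ.toLinearMap)
      (e_mul_matOf hf e φ.symm.toLinearMap) (matOf_mul_f f he φ.symm.toLinearMap)
      (matOf_mul_matOf hf φ) ?_
    have := matOf_mul_matOf he φ.symm
    rwa [LinearEquiv.symm_symm] at this
  · rintro ⟨g, hg⟩
    set E : Matrix (Fin n ⊕ Fin m) (Fin n ⊕ Fin m) A := Matrix.fromBlocks e 0 0 0 with hE
    set F : Matrix (Fin n ⊕ Fin m) (Fin n ⊕ Fin m) A := Matrix.fromBlocks 0 0 0 f with hF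
    set M : Matrix (Fin n ⊕ Fin m) (Fin n ⊕ Fin m) A := g.val with hM
    set N : Matrix (Fin n ⊕ Fin m) (Fin n ⊕ Fin m) A := (g⁻¹).val with hN
    have hMN : M * N = 1 := g.mul_inv
    have hNM : N * M = 1 := g.inv_mul
    have hEE : E * E = E := by rw [hE]; simp [fromBlocks_multiply, he]
    have hFF : F * F = F := by rw [hF]; simp [fromBlocks_multiply, hf]
    have hME : M * E = F * M := by
      have h := congrArg (· * M) hg
      simpa [mul_assoc, hNM, hMN, ← hM, ← hN, ← hE, ← hF] using h
    have hEN : E * N = N * F := by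
      calc E * N = (N * M) * (E * N) := by rw [hNM, Matrix.one_mul]
        _ = N * (M * E) * N := by simp only [Matrix.mul_assoc]
        _ = N * (F * M) * N := by rw [hME]
        _ = N * F * (M * N) := by simp only [Matrix.mul_assoc]
        _ = N * F := by rw [hMN, Matrix.mul_one]
    set a : Matrix (Fin n) (Fin m) A := e * N.toBlocks₁₂ * f with ha
    set b : Matrix (Fin m) (Fin n) A := f * M.toBlocks₂₁ * e with hb
    have hy : E * N * F = Matrix.fromBlocks 0 a 0 0 := by
      conv_lhs => rw [← fromBlocks_toBlocks N]
      rw [hE, hF, fromBlocks_multiply, fromBlocks_multiply]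
      simp [ha, Matrix.mul_assoc]
    have hx : F * M * E = Matrix.fromBlocks 0 0 b 0 := by
      conv_lhs => rw [← fromBlocks_toBlocks M]
      rw [hE, hF, fromBlocks_multiply, fromBlocks_multiply]
      simp [hb, Matrix.mul_assoc]
    have hyx : (E * N * F) * (F * M * E) = E := by
      have h1 : (E * N * F) * (F * M * E) = E * N * (F * F) * M * E := by
        simp only [Matrix.mul_assoc]
      rw [h1, hFF, Matrix.mul_assoc (E * N) F M, ← hME, ← Matrix.mul_assoc,
        Matrix.mul_assoc E N M, hNM, Matrix.mul_one, hEE, hEE]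
    have hxy : (F * M * E) * (E * N * F) = F := by
      have h1 : (F * M * E) * (E * N * F) = F * M * (E * E) * N * F := by
        simp only [Matrix.mul_assoc]
      rw [h1, hEE, Matrix.mul_assoc (F * M) E N, hEN, ← Matrix.mul_assoc,
        Matrix.mul_assoc F M N, hMN, Matrix.mul_one, hFF, hFF]
    rw [hy, hx] at hyx hxy
    rw [fromBlocks_multiply] at hyx hxy
    have hab : a * b = e := by
      have := congrArg Matrix.toBlocks₁₁ hyx
      simpa [hE] using this
    have hba : b * a = f := by
      have := congrArg Matrix.toBlocks₂₂ hxy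
      simpa [hF] using this
    have hea : e * a = a := by
      rw [ha]; simp only [← Matrix.mul_assoc]; rw [he]
    have haf : a * f = a := by rw [ha, Matrix.mul_assoc, hf]
    have hfb : f * b = b := by
      rw [hb]; simp only [← Matrix.mul_assoc]; rw [hf]
    have hbe : b * e = b := by rw [hb, Matrix.mul_assoc, he]
    -- now build the linear equivalence
    have amem : ∀ w : Fin n → A, w ᵥ* a ∈ LinearMap.range f.vecMulLinear := fun w =>
      ⟨w ᵥ* a, by rw [vecMulLinear_apply, vecMul_vecMul, haf]⟩
    have bmem : ∀ w : Fin m → A, w ᵥ* b ∈ LinearMap.range e.vecMulLinear := fun w =>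
      ⟨w ᵥ* b, by rw [vecMulLinear_apply, vecMul_vecMul, hbe]⟩
    refine ⟨LinearEquiv.ofLinear
      (LinearMap.codRestrict _ (a.vecMulLinear ∘ₗ (LinearMap.range e.vecMulLinear).subtype)
        fun w => by simpa [vecMulLinear_apply] using amem w.1)
      (LinearMap.codRestrict _ (b.vecMulLinear ∘ₗ (LinearMap.range f.vecMulLinear).subtype)
        fun w => by simpa [vecMulLinear_apply] using bmem w.1) ?_ ?_⟩
    · ext w
      simp only [LinearMap.coe_comp, Function.comp_apply, LinearMap.codRestrict_apply,
        Submodule.coe_subtype, LinearMap.id_coe, id_eq, vecMulLinear_apply]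
      rw [vecMul_vecMul, hba]
      exact congrFun (fix_of_mem_range hf w.2) _
    · ext w
      simp only [LinearMap.coe_comp, Function.comp_apply, LinearMap.codRestrict_apply,
        Submodule.coe_subtype, LinearMap.id_coe, id_eq, vecMulLinear_apply]
      rw [vecMul_vecMul, hab]
      exact congrFun (fix_of_mem_range he w.2) _
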